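/- arXiv:0707.0048 — 2 statements merged into one kernel-verified Lean document; each statement's English description precedes it below -/
import Mathlib

section
/- Let 𝖧 be a complex Hilbert space and let G₁ = (S₁, L₁, H₁) and G₂ = (S₂, L₂, H₂) be n-channel system triples with S₁ and S₂ unitary and H₁, H₂ self-adjoint. If (S′, L′, H′) is any n-channel system triple satisfying G₂ ◁ G₁ = G₁ ◁ (S′, L′, H′) (equality of all three components of the series products), then necessarily S′ = S₁†S₂S₁, L′ = S₁†(S₂ − I)L₁ + S₁†L₂, and H′ = H₂ + Im{ L₂†(S₂ + I)L₁ − L₁†S₂L₁ }, where Im{X} := (X − X†)/(2i). In particular, the triple (S₂′, L₂′, H₂′) making the two cascades parametrically equivalent is unique. -/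
/- Series product of quantum system triples (Gough–James), Theorem 2 (existence part):
the cascade G₂ ◁ G₁ is parametrically equivalent to G₁ ◁ G₂′ with
S₂′ = S₁† S₂ S₁, L₂′ = S₁†(S₂ − I)L₁ + S₁† L₂,
H₂′ = H₂ + Im{ L₂†(S₂ + I)L₁ − L₁† S₂ L₁ }. -/

noncomputable section

open Matrix

variable {E : Type*} [NormedAddCommGroup E] [InnerProductSpace ℂ E] [CompleteSpace E]

/-- `L₂† S L₁ = Σ_{j,k} (L₂ j)* (S j k) (L₁ k)`. -/
def quadForm {n : ℕ} (L₂ : Fin n → (E →L[ℂ] E)) (S : Matrix (Fin n) (Fin n) (E →L[ℂ] E))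
    (L₁ : Fin n → (E →L[ℂ] E)) : E →L[ℂ] E :=
  ∑ j, ∑ k, star (L₂ j) * S j k * L₁ k

/-- Scattering-matrix component of the series product `G₂ ◁ G₁`. -/
def seriesS {n : ℕ} (S₂ S₁ : Matrix (Fin n) (Fin n) (E →L[ℂ] E)) :
    Matrix (Fin n) (Fin n) (E →L[ℂ] E) := S₂ * S₁

/-- Coupling-vector component of the series product `G₂ ◁ G₁`: `L₂ + S₂ L₁`. -/
def seriesL {n : ℕ} (S₂ : Matrix (Fin n) (Fin n) (E →L[ℂ] E))
    (L₂ L₁ : Fin n → (E →L[ℂ] E)) : Fin n → (E →L[ℂ] E) :=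
  fun j => L₂ j + S₂.mulVec L₁ j

/-- Hamiltonian component of the series product `G₂ ◁ G₁`:
`H₁ + H₂ + (1/(2i))(L₂†S₂L₁ − L₁†S₂†L₂)`. -/
def seriesH {n : ℕ} (S₂ : Matrix (Fin n) (Fin n) (E →L[ℂ] E))
    (L₂ L₁ : Fin n → (E →L[ℂ] E)) (H₁ H₂ : E →L[ℂ] E) : E →L[ℂ] E :=
  H₁ + H₂ + ((2 * Complex.I)⁻¹) • (quadForm L₂ S₂ L₁ - star (quadForm L₂ S₂ L₁))

/-- `Im X = (X − X†)/(2i)`. -/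
def opIm (X : E →L[ℂ] E) : E →L[ℂ] E := ((2 * Complex.I)⁻¹) • (X - star X)



/-- `D a b = Σ_j (a j)* (b j)`. -/
def dotD {n : ℕ} (a b : Fin n → (E →L[ℂ] E)) : E →L[ℂ] E := ∑ j, star (a j) * b j

lemma quadForm_eq {n : ℕ} (L₂ : Fin n → (E →L[ℂ] E)) (S : Matrix (Fin n) (Fin n) (E →L[ℂ] E))
    (L₁ : Fin n → (E →L[ℂ] E)) : quadForm L₂ S L₁ = ∑ j, star (L₂ j) * S.mulVec L₁ j := by
  simp [quadForm, Matrix.mulVec, dotProduct, Finset.mul_sum, mul_assoc]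

lemma quadForm_one {n : ℕ} (L₂ L₁ : Fin n → (E →L[ℂ] E)) :
    quadForm L₂ 1 L₁ = dotD L₂ L₁ := by
  simp [quadForm_eq, dotD]

lemma star_dotD {n : ℕ} (a b : Fin n → (E →L[ℂ] E)) : star (dotD a b) = dotD b a := by
  simp [dotD, star_sum]

lemma opIm_add (X Y : E →L[ℂ] E) : opIm (X + Y) = opIm X + opIm Y := by
  simp only [opIm, star_add, ← smul_add]
  congr 1
  abel

lemma opIm_sub (X Y : E →L[ℂ] E) : opIm (X - Y) = opIm X - opIm Y := by
  simp only [opIm, star_sub, ← smul_sub]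
  congr 1
  abel

lemma opIm_of_selfAdjoint {X : E →L[ℂ] E} (h : star X = X) : opIm X = 0 := by
  simp [opIm, h]

lemma quadForm_add_left {n : ℕ} (L₂ : Fin n → (E →L[ℂ] E))
    (S T : Matrix (Fin n) (Fin n) (E →L[ℂ] E)) (L₁ : Fin n → (E →L[ℂ] E)) :
    quadForm L₂ (S + T) L₁ = quadForm L₂ S L₁ + quadForm L₂ T L₁ := by
  simp [quadForm_eq, Matrix.add_mulVec, mul_add, Finset.sum_add_distrib]

/- Gough–James Theorem 2 (uniqueness part): if `G₂ ◁ G₁ = G₁ ◁ (S′, L′, H′)`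
componentwise, then `S′ = S₁†S₂S₁`, `L′ = S₁†(S₂ − I)L₁ + S₁†L₂`, and
`H′ = H₂ + Im{ L₂†(S₂ + I)L₁ − L₁†S₂L₁ }`. -/
theorem series_exchange_unique {n : ℕ}
    (S₁ S₂ S' : Matrix (Fin n) (Fin n) (E →L[ℂ] E)) (L₁ L₂ L' : Fin n → (E →L[ℂ] E))
    (H₁ H₂ H' : E →L[ℂ] E)
    (hS₁ : S₁ᴴ * S₁ = 1 ∧ S₁ * S₁ᴴ = 1)
    (hS₂ : S₂ᴴ * S₂ = 1 ∧ S₂ * S₂ᴴ = 1)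
    (hS' : S'ᴴ * S' = 1 ∧ S' * S'ᴴ = 1)
    (hH₁ : IsSelfAdjoint H₁) (hH₂ : IsSelfAdjoint H₂) (hH' : IsSelfAdjoint H')
    (heqS : seriesS S₂ S₁ = seriesS S₁ S')
    (heqL : seriesL S₂ L₂ L₁ = seriesL S₁ L₁ L')
    (heqH : seriesH S₂ L₂ L₁ H₁ H₂ = seriesH S₁ L₁ L' H' H₁) :
    S' = S₁ᴴ * S₂ * S₁ ∧
    L' = (fun j => (S₁ᴴ * (S₂ - 1)).mulVec L₁ j + S₁ᴴ.mulVec L₂ j) ∧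
    H' = H₂ + opIm (quadForm L₂ (S₂ + 1) L₁ - quadForm L₁ S₂ L₁) := by

  have hS : S₂ * S₁ = S₁ * S' := heqS
  -- the coupling identity
  have hmv : S₁.mulVec L' = fun j => L₂ j + S₂.mulVec L₁ j - L₁ j := by
    funext j
    have h := congrFun heqL j
    simp only [seriesL] at h
    rw [h]; abel
  refine ⟨?_, ?_, ?_⟩
  · calc S' = (S₁ᴴ * S₁) * S' := by rw [hS₁.1, one_mul]
      _ = S₁ᴴ * (S₂ * S₁) := by rw [mul_assoc, ← hS]
      _ = S₁ᴴ * S₂ * S₁ := by rw [mul_assoc]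
  · calc L' = S₁ᴴ.mulVec (S₁.mulVec L') := by
          rw [Matrix.mulVec_mulVec, hS₁.1, Matrix.one_mulVec]
      _ = S₁ᴴ.mulVec (L₂ + S₂.mulVec L₁ - L₁) := by rw [hmv]; rfl
      _ = (fun j => (S₁ᴴ * (S₂ - 1)).mulVec L₁ j + S₁ᴴ.mulVec L₂ j) := by
          funext j
          simp only [Matrix.mulVec_sub, Matrix.mulVec_add, Matrix.mulVec_mulVec,
            Matrix.mul_sub, Matrix.mul_one, Matrix.sub_mulVec, Pi.add_apply, Pi.sub_apply]
          abel
  · set Q := quadForm L₂ S₂ L₁ with hQ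
    set Q' := quadForm L₁ S₁ L' with hQ'
    have hH : H' = H₂ + opIm Q - opIm Q' := by
      have h : H₁ + H₂ + opIm Q = H' + H₁ + opIm Q' := heqH
      have h2 : H' = (H₁ + H₂ + opIm Q) - H₁ - opIm Q' := by rw [h]; abel
      rw [h2]; abel
    have hQ'eq : Q' = dotD L₁ L₂ + quadForm L₁ S₂ L₁ - dotD L₁ L₁ := by
      rw [hQ', quadForm_eq, hmv]
      simp [mul_add, mul_sub, Finset.sum_add_distrib, Finset.sum_sub_distrib, dotD,
        quadForm_eq]
    have hT : quadForm L₂ (S₂ + 1) L₁ = Q + dotD L₂ L₁ := by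
      rw [quadForm_add_left, quadForm_one]
    have hW : star (dotD L₁ L₁ - dotD L₁ L₂ - dotD L₂ L₁)
        = dotD L₁ L₁ - dotD L₁ L₂ - dotD L₂ L₁ := by
      simp only [star_sub, star_dotD]; abel
    have hdiff : Q - Q' = (quadForm L₂ (S₂ + 1) L₁ - quadForm L₁ S₂ L₁)
        + (dotD L₁ L₁ - dotD L₁ L₂ - dotD L₂ L₁) := by
      rw [hQ'eq, hT]; abel
    have key : opIm Q - opIm Q' = opIm (quadForm L₂ (S₂ + 1) L₁ - quadForm L₁ S₂ L₁) := by
      rw [← opIm_sub, hdiff, opIm_add, opIm_of_selfAdjoint hW, add_zero]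
    rw [hH, add_sub_assoc, key]
end
end

section
/- Let 𝖧 be a complex Hilbert space, a a bounded operator on 𝖧, γ ≥ 0 and Δ ∈ ℝ, and let α, β ∈ ℂ satisfy α*α + β*β = 1 and α*β = αβ*. Set C = (1, √γ·a, Δ·a†a), N = (1, 0, 0), M = (S_M, 0, 0) with S_M = [[β·1, −α·1],[α·1, β·1]], and define the modified 1-channel triples C′ = (1, β*·√γ·a, Δ·a†a) and N′ = (1, −α*·√γ·a, 0). Then the two networks are parametrically equivalent: (C ⊞ N) ◁ M = M ◁ (C′ ⊞ N′), componentwise in the scattering matrix, coupling vector, and Hamiltonian. -/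
/- Series product of quantum system triples (Gough–James), Theorem 2 (existence part):
the cascade G₂ ◁ G₁ is parametrically equivalent to G₁ ◁ G₂′ with
S₂′ = S₁† S₂ S₁, L₂′ = S₁†(S₂ − I)L₁ + S₁† L₂,
H₂′ = H₂ + Im{ L₂†(S₂ + I)L₁ − L₁† S₂ L₁ }. -/

noncomputable section

open Matrix

variable {E : Type*} [NormedAddCommGroup E] [InnerProductSpace ℂ E] [CompleteSpace E]

/-- Scattering matrix of the concatenation `G₁ ⊞ G₂` of two 1-channel triples. -/
def concatS (S₁ S₂ : E →L[ℂ] E) : Matrix (Fin 2) (Fin 2) (E →L[ℂ] E) :=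
  !![S₁, 0; 0, S₂]

/-- Coupling vector of the concatenation `G₁ ⊞ G₂` of two 1-channel triples. -/
def concatL (L₁ L₂ : E →L[ℂ] E) : Fin 2 → (E →L[ℂ] E) := ![L₁, L₂]

/-- Hamiltonian of the concatenation `G₁ ⊞ G₂` of two 1-channel triples. -/
def concatH (H₁ H₂ : E →L[ℂ] E) : E →L[ℂ] E := H₁ + H₂

/- Gough–James, equations (29)–(30): moving the beamsplitter from the input to
the output of the modified cavity, `(C ⊞ N) ◁ M = M ◁ (C′ ⊞ N′)` where
`C′ = (1, β*√γ a, Δ a†a)` and `N′ = (1, −α*√γ a, 0)`. -/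
theorem beamsplitter_cavity_equivalent (a : E →L[ℂ] E) (γ Δ : ℝ) (hγ : 0 ≤ γ)
    (α β : ℂ) (h₁ : star α * α + star β * β = 1) (h₂ : star α * β = α * star β) :
    seriesS (concatS (1 : E →L[ℂ] E) 1)
        (!![β • (1 : E →L[ℂ] E), (-α) • (1 : E →L[ℂ] E);
            α • (1 : E →L[ℂ] E), β • (1 : E →L[ℂ] E)]) =
      seriesS (!![β • (1 : E →L[ℂ] E), (-α) • (1 : E →L[ℂ] E);
                  α • (1 : E →L[ℂ] E), β • (1 : E →L[ℂ] E)])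
        (concatS (1 : E →L[ℂ] E) 1) ∧
    seriesL (concatS (1 : E →L[ℂ] E) 1)
        (concatL ((Real.sqrt γ : ℂ) • a) 0) (0 : Fin 2 → (E →L[ℂ] E)) =
      seriesL (!![β • (1 : E →L[ℂ] E), (-α) • (1 : E →L[ℂ] E);
                  α • (1 : E →L[ℂ] E), β • (1 : E →L[ℂ] E)])
        (0 : Fin 2 → (E →L[ℂ] E))
        (concatL ((star β * (Real.sqrt γ : ℂ)) • a) ((-star α * (Real.sqrt γ : ℂ)) • a)) ∧
    seriesH (concatS (1 : E →L[ℂ] E) 1)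
        (concatL ((Real.sqrt γ : ℂ) • a) 0) (0 : Fin 2 → (E →L[ℂ] E))
        0 (concatH ((Δ : ℂ) • (star a * a)) 0) =
      seriesH (!![β • (1 : E →L[ℂ] E), (-α) • (1 : E →L[ℂ] E);
                  α • (1 : E →L[ℂ] E), β • (1 : E →L[ℂ] E)])
        (0 : Fin 2 → (E →L[ℂ] E))
        (concatL ((star β * (Real.sqrt γ : ℂ)) • a) ((-star α * (Real.sqrt γ : ℂ)) • a))
        (concatH ((Δ : ℂ) • (star a * a)) 0) 0 := by
  have h₁' : (starRingEnd ℂ) α * α + (starRingEnd ℂ) β * β = 1 := h₁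
  have h₂' : (starRingEnd ℂ) α * β = α * (starRingEnd ℂ) β := h₂
  refine ⟨?_, ?_, ?_⟩
  · ext i j
    fin_cases i <;> fin_cases j <;>
      simp [seriesS, concatS, Matrix.mul_apply, Fin.sum_univ_two]
  · funext j
    fin_cases j
    · simp [seriesL, concatL, concatS, Matrix.mulVec, dotProduct,
        Fin.sum_univ_two, smul_mul_assoc, mul_smul_comm, smul_smul]
      rw [← add_smul, show (starRingEnd ℂ) β * (Real.sqrt γ : ℂ) * β
          + (starRingEnd ℂ) α * (Real.sqrt γ : ℂ) * α = ((Real.sqrt γ : ℝ) : ℂ) by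
        linear_combination (Real.sqrt γ : ℂ) * h₁', Complex.coe_smul]
    · simp [seriesL, concatL, concatS, Matrix.mulVec, dotProduct,
        Fin.sum_univ_two, smul_mul_assoc, mul_smul_comm, smul_smul]
      rw [← neg_smul, ← add_smul, show (starRingEnd ℂ) β * (Real.sqrt γ : ℂ) * α
          + -((starRingEnd ℂ) α * (Real.sqrt γ : ℂ) * β) = 0 by
        linear_combination (-(Real.sqrt γ : ℂ)) * h₂', zero_smul]
  · simp [seriesH, quadForm, concatL, concatS, concatH, Fin.sum_univ_two]
end
end
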